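/- For every α ∈ ℂ, the 4-dimensional complex algebra B⁴₂₄(α) with nonzero products e₁e₁ = e₂, e₁e₂ = e₃, e₁e₃ = e₄, e₂e₁ = αe₃, e₂e₂ = αe₄, e₃e₁ = αe₄ is a nilpotent bicommutative algebra. -/
import Mathlib


noncomputable def mB424 (α : ℂ) : (Fin 4 → ℂ) →ₗ[ℂ] (Fin 4 → ℂ) →ₗ[ℂ] (Fin 4 → ℂ) :=
  LinearMap.mk₂ ℂ (fun u v =>
      ![0, u 0 * v 0, u 0 * v 1 + α * (u 1 * v 0),
        u 0 * v 2 + α * (u 1 * v 1) + α * (u 2 * v 0)])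
    (fun x y v => by funext i; fin_cases i <;> simp <;> ring)
    (fun a x v => by funext i; fin_cases i <;> simp <;> ring)
    (fun u x y => by funext i; fin_cases i <;> simp <;> ring)
    (fun u a x => by funext i; fin_cases i <;> simp <;> ring)

noncomputable def mulSub {V : Type*} [AddCommGroup V] [Module ℂ V]
    (μ : V →ₗ[ℂ] V →ₗ[ℂ] V) (S T : Submodule ℂ V) : Submodule ℂ V :=
  Submodule.span ℂ {w | ∃ u ∈ S, ∃ v ∈ T, w = μ u v}

/-- The powers of an algebra: `A¹ = A`, `Aⁿ = Σ_{i+j=n} Aⁱ·Aʲ`. -/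
noncomputable def pw {V : Type*} [AddCommGroup V] [Module ℂ V]
    (μ : V →ₗ[ℂ] V →ₗ[ℂ] V) : ℕ → Submodule ℂ V
  | 0 => ⊤
  | 1 => ⊤
  | (n+2) => ⨆ i : Fin (n+1), mulSub μ (pw μ (i+1)) (pw μ (n+1-i))
  decreasing_by all_goals (have := i.isLt; omega)

lemma mB424_apply (α : ℂ) (u v : Fin 4 → ℂ) :
    mB424 α u v = ![0, u 0 * v 0, u 0 * v 1 + α * (u 1 * v 0),
        u 0 * v 2 + α * (u 1 * v 1) + α * (u 2 * v 0)] := rfl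

/-- Vectors whose first `k` coordinates vanish. -/
noncomputable def Wdeg (k : ℕ) : Submodule ℂ (Fin 4 → ℂ) where
  carrier := {v | ∀ i : Fin 4, (i : ℕ) < k → v i = 0}
  add_mem' := by intro a b ha hb i hi; simp [ha i hi, hb i hi]
  zero_mem' := by intro i hi; rfl
  smul_mem' := by intro c a ha i hi; simp [ha i hi]

lemma Wdeg_mono {a b : ℕ} (h : a ≤ b) : Wdeg b ≤ Wdeg a := by
  intro v hv i hi; exact hv i (lt_of_lt_of_le hi h)

lemma mB424_mem_Wdeg (α : ℂ) (a b : ℕ) (u v : Fin 4 → ℂ)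
    (hu : u ∈ Wdeg a) (hv : v ∈ Wdeg b) : mB424 α u v ∈ Wdeg (a + b + 1) := by
  have hz : ∀ (j k : Fin 4), (j : ℕ) + (k : ℕ) < a + b → u j * v k = 0 := by
    intro j k h
    rcases lt_or_ge (j : ℕ) a with hj | hj
    · rw [hu j hj, zero_mul]
    · rw [hv k (by omega), mul_zero]
  intro i hi
  rw [mB424_apply]
  fin_cases i
  · rfl
  · show u 0 * v 0 = 0
    exact hz 0 0 (by simp at hi ⊢; omega)
  · show u 0 * v 1 + α * (u 1 * v 0) = 0
    rw [hz 0 1 (by simp at hi ⊢; omega), hz 1 0 (by simp at hi ⊢; omega)]; ring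
  · show u 0 * v 2 + α * (u 1 * v 1) + α * (u 2 * v 0) = 0
    rw [hz 0 2 (by simp at hi ⊢; omega), hz 1 1 (by simp at hi ⊢; omega),
      hz 2 0 (by simp at hi ⊢; omega)]; ring

lemma mulSub_le_Wdeg (α : ℂ) {S T : Submodule ℂ (Fin 4 → ℂ)} {a b : ℕ}
    (hS : S ≤ Wdeg a) (hT : T ≤ Wdeg b) :
    mulSub (mB424 α) S T ≤ Wdeg (a + b + 1) := by
  rw [mulSub, Submodule.span_le]
  rintro w ⟨u, hu, v, hv, rfl⟩
  exact mB424_mem_Wdeg α a b u v (hS hu) (hT hv)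

lemma pw_le_Wdeg (α : ℂ) : ∀ n : ℕ, pw (mB424 α) (n + 1) ≤ Wdeg n := by
  intro n
  induction n using Nat.strong_induction_on with
  | _ n IH =>
    match n with
    | 0 => intro v _ i hi; omega
    | (m + 1) =>
      rw [show m + 1 + 1 = m + 2 from rfl, pw]
      apply iSup_le
      intro i
      have hi := i.isLt
      have h1 : pw (mB424 α) ((i : ℕ) + 1) ≤ Wdeg i := IH i (by omega)
      have h2 : pw (mB424 α) (m + 1 - (i : ℕ)) ≤ Wdeg (m - i) := by
        have : m + 1 - (i : ℕ) = (m - i) + 1 := by omega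
        rw [this]; exact IH (m - i) (by omega)
      have := mulSub_le_Wdeg α h1 h2
      refine le_trans this (Wdeg_mono ?_)
      omega

/-- For every `α ∈ ℂ`, the algebra `B⁴₂₄(α)` is a nilpotent bicommutative algebra
(with `A⁵ = 0`). -/
theorem B424_nilpotent_bicommutative (α : ℂ) :
    (∀ x y z : Fin 4 → ℂ, mB424 α (mB424 α x y) z = mB424 α (mB424 α x z) y) ∧
    (∀ x y z : Fin 4 → ℂ, mB424 α x (mB424 α y z) = mB424 α y (mB424 α x z)) ∧
    pw (mB424 α) 5 = ⊥ := by
  refine ⟨?_, ?_, ?_⟩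
  · intro x y z
    simp only [mB424_apply]
    funext i
    fin_cases i
    · rfl
    · show (0 : ℂ) * z 0 = 0 * y 0
      ring
    · show (0 : ℂ) * z 1 + α * (x 0 * y 0 * z 0) = 0 * y 1 + α * (x 0 * z 0 * y 0)
      ring
    · show (0 : ℂ) * z 2 + α * (x 0 * y 0 * z 1)
          + α * ((x 0 * y 1 + α * (x 1 * y 0)) * z 0)
        = 0 * y 2 + α * (x 0 * z 0 * y 1) + α * ((x 0 * z 1 + α * (x 1 * z 0)) * y 0)
      ring
  · intro x y z
    simp only [mB424_apply]
    funext i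
    fin_cases i
    · rfl
    · show x 0 * (0 : ℂ) = y 0 * 0
      ring
    · show x 0 * (y 0 * z 0) + α * (x 1 * (0 : ℂ)) = y 0 * (x 0 * z 0) + α * (y 1 * 0)
      ring
    · show x 0 * (y 0 * z 1 + α * (y 1 * z 0)) + α * (x 1 * (y 0 * z 0))
          + α * (x 2 * (0 : ℂ))
        = y 0 * (x 0 * z 1 + α * (x 1 * z 0)) + α * (y 1 * (x 0 * z 0)) + α * (y 2 * 0)
      ring
  · refine le_antisymm ?_ bot_le
    refine le_trans (pw_le_Wdeg α 4) ?_
    intro v hv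
    have : v = 0 := by funext i; exact hv i i.isLt
    simp [this]
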